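/- Let n > r ≥ 1 be integers, d > 1, ρ > 0 with cosh(ρ)^{2(n−r)/r} > d². With λ'(ρ) = d(cosh(ρ)^{2(n−r)/r} − d²)^{-1/2}, λ'' given by the ODE λ'' = −((n−r)/(rd²))λ'³ tanh(ρ) cosh(ρ)^{2(n−r)/r}, and κ₁ = λ''(1+λ'²)^{-3/2}, κ₂ = λ'(1+λ'²)^{-1/2} tanh(ρ), the normalized j-th symmetric function H_j of (κ₁, κ₂,…,κ₂) satisfies: H_j > 0 for 1 ≤ j < r, H_r = 0, and H_j < 0 for r < j ≤ n. -/

import Mathlib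

open Real

lemma esymm_replicate (m k : ℕ) (b : ℝ) :
    (Multiset.replicate m b).esymm k = (m.choose k : ℝ) * b ^ k := by
  unfold Multiset.esymm
  have h : ∀ t ∈ (Multiset.replicate m b).powersetCard k,
      t.prod = (fun _ : Multiset ℝ => b ^ k) t := by
    intro t ht
    rw [Multiset.mem_powersetCard] at ht
    have ht' : t = Multiset.replicate (Multiset.card t) b :=
      Multiset.eq_replicate_of_mem fun x hx =>
        Multiset.eq_of_mem_replicate (Multiset.mem_of_le ht.1 hx)
    rw [ht', ht.2, Multiset.prod_replicate]
  rw [Multiset.map_congr rfl h, Multiset.map_const', Multiset.sum_replicate,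
    Multiset.card_powersetCard, Multiset.card_replicate, nsmul_eq_mul]

lemma esymm_cons (a b : ℝ) (m k : ℕ) :
    (a ::ₘ Multiset.replicate m b).esymm (k + 1)
      = (m.choose (k + 1) : ℝ) * b ^ (k + 1) + a * ((m.choose k : ℝ) * b ^ k) := by
  unfold Multiset.esymm
  rw [Multiset.powersetCard_cons, Multiset.map_add, Multiset.sum_add, Multiset.map_map]
  have h : ∀ t ∈ (Multiset.replicate m b).powersetCard k,
      (Multiset.prod ∘ Multiset.cons a) t = (fun t : Multiset ℝ => a * t.prod) t := by
    intro t _; simp [Multiset.prod_cons]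
  rw [Multiset.map_congr rfl h]
  have e1 := esymm_replicate m (k+1) b
  have e2 := esymm_replicate m k b
  unfold Multiset.esymm at e1 e2
  rw [e1, Multiset.sum_map_mul_left, e2]

theorem stmt_9 (n r : ℕ) (hr : 1 ≤ r) (hrn : r < n)
    (d ρ : ℝ) (hd : 1 < d) (hρ : 0 < ρ)
    (hcosh : Real.cosh ρ ^ (2 * ((n : ℝ) - r) / r) > d ^ 2)
    (l' l'' κ₁ κ₂ : ℝ)
    (hl' : l' = d * (Real.cosh ρ ^ (2 * ((n : ℝ) - r) / r) - d ^ 2) ^ (-(1 : ℝ) / 2))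
    (hl'' : l'' = -(((n : ℝ) - r) / (r * d ^ 2)) * l' ^ 3 * Real.tanh ρ *
      Real.cosh ρ ^ (2 * ((n : ℝ) - r) / r))
    (hκ₁ : κ₁ = l'' * (1 + l' ^ 2) ^ (-(3 : ℝ) / 2))
    (hκ₂ : κ₂ = l' * (1 + l' ^ 2) ^ (-(1 : ℝ) / 2) * Real.tanh ρ)
    (H : ℕ → ℝ)
    (hH : ∀ k : ℕ, H k =
      ((n.choose k : ℝ))⁻¹ * (κ₁ ::ₘ Multiset.replicate (n - 1) κ₂).esymm k) :
    (∀ j : ℕ, 1 ≤ j → j < r → 0 < H j) ∧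
    H r = 0 ∧
    (∀ j : ℕ, r < j → j ≤ n → H j < 0) := by
  set c : ℝ := Real.cosh ρ ^ (2 * ((n : ℝ) - r) / r) with hc
  have hd0 : (0:ℝ) < d := lt_trans one_pos hd
  have hcd : (0:ℝ) < c - d ^ 2 := sub_pos.mpr hcosh
  have htanh : 0 < Real.tanh ρ := by
    rw [Real.tanh_eq_sinh_div_cosh]
    exact div_pos (Real.sinh_pos_iff.mpr hρ) (Real.cosh_pos ρ)
  have hl'pos : 0 < l' := by
    rw [hl']; exact mul_pos hd0 (Real.rpow_pos_of_pos hcd _)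
  have hsq : ((c - d ^ 2) ^ (-(1:ℝ) / 2)) ^ 2 = (c - d ^ 2)⁻¹ := by
    rw [← Real.rpow_natCast ((c - d ^ 2) ^ (-(1:ℝ) / 2)) 2, ← Real.rpow_mul hcd.le]
    norm_num [Real.rpow_neg_one]
  have hL2 : l' ^ 2 = d ^ 2 * (c - d ^ 2)⁻¹ := by
    rw [hl', mul_pow, hsq]
  have h1p : 1 + l' ^ 2 = c * (c - d ^ 2)⁻¹ := by
    rw [hL2]; field_simp; ring
  have h1pos : (0:ℝ) < 1 + l' ^ 2 := by nlinarith [sq_nonneg l']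
  have hsplit : (1 + l' ^ 2) ^ (-(3:ℝ) / 2)
      = (1 + l' ^ 2)⁻¹ * (1 + l' ^ 2) ^ (-(1:ℝ) / 2) := by
    rw [← Real.rpow_neg_one (1 + l' ^ 2), ← Real.rpow_add h1pos]
    norm_num
  have hr' : (0:ℝ) < (r:ℝ) := by exact_mod_cast hr
  have hn' : (0:ℝ) < (n:ℝ) := by
    have : 0 < n := by omega
    exact_mod_cast this
  have hκ₂pos : 0 < κ₂ := by
    rw [hκ₂]
    exact mul_pos (mul_pos hl'pos (Real.rpow_pos_of_pos h1pos _)) htanh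
  have hc0 : (0:ℝ) < c := by nlinarith
  have h3 : l' ^ 3 = l' * (d ^ 2 * (c - d ^ 2)⁻¹) := by rw [← hL2]; ring
  have hscal : l'' * (1 + l' ^ 2)⁻¹ = -(((n:ℝ) - r) / r) * l' * Real.tanh ρ := by
    rw [hl'', h1p, h3]
    field_simp
  have hK : κ₁ = -(((n:ℝ) - r) / r) * κ₂ := by
    rw [hκ₁, hκ₂, hsplit]
    linear_combination ((1 + l' ^ 2) ^ (-(1:ℝ) / 2)) * hscal
  have hHj : ∀ k : ℕ, (1 + k) ≤ n →
      H (1 + k) * ((r:ℝ) * (1 + k) * (n.choose (1 + k) : ℝ))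
        = ((n-1).choose k : ℝ) * (n:ℝ) * ((r:ℝ) - (1 + k)) * κ₂ ^ (1 + k) := by
    intro k hjn
    have hck : ((n-1).choose (k+1) : ℝ) * ((k:ℝ)+1)
        = ((n-1).choose k : ℝ) * ((n:ℝ) - ((k:ℝ)+1)) := by
      have h := Nat.choose_succ_right_eq (n-1) k
      have hle : k + 1 ≤ n := by omega
      have h2 : ((n-1).choose (k+1) : ℝ) * ((k:ℝ)+1)
          = ((n-1).choose k : ℝ) * ((n - 1 - k : ℕ) : ℝ) := by exact_mod_cast h
      rw [h2]
      congr 1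
      have h3 : n - 1 - k = n - (k + 1) := by omega
      rw [h3, Nat.cast_sub hle]
      push_cast; ring
    have hchoose : (0:ℝ) < (n.choose (1 + k) : ℝ) := by
      exact_mod_cast Nat.choose_pos (by omega : 1 + k ≤ n)
    rw [hH, show 1 + k = k + 1 from by ring, esymm_cons, hK]
    have hchoose' : (0:ℝ) < (n.choose (k+1) : ℝ) := by
      rw [show k + 1 = 1 + k from by ring]; exact hchoose
    field_simp [hr'.ne', hchoose.ne']
    linear_combination ((r:ℝ) * κ₂ ^ (k+1)) * hck
  refine ⟨?_, ?_, ?_⟩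
  · intro j hj1 hjr
    obtain ⟨k, rfl⟩ := Nat.exists_eq_add_of_le hj1
    have h1 := hHj k (by omega)
    have hchoose : (0:ℝ) < (n.choose (1 + k) : ℝ) := by
      exact_mod_cast Nat.choose_pos (by omega : 1 + k ≤ n)
    have hP : (0:ℝ) < (r:ℝ) * (1 + k) * (n.choose (1 + k) : ℝ) := by positivity
    have hC1 : (0:ℝ) < ((n-1).choose k : ℝ) := by
      exact_mod_cast Nat.choose_pos (by omega : k ≤ n - 1)
    have hrk : (0:ℝ) < (r:ℝ) - (1 + k) := by
      have : ((1 + k : ℕ) : ℝ) < r := by exact_mod_cast hjr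
      push_cast at this; linarith
    have hR : (0:ℝ) < ((n-1).choose k : ℝ) * (n:ℝ) * ((r:ℝ) - (1 + k)) * κ₂ ^ (1 + k) := by
      positivity
    have hHval : H (1 + k) = ((n-1).choose k : ℝ) * (n:ℝ) * ((r:ℝ) - (1 + k)) * κ₂ ^ (1 + k)
        / ((r:ℝ) * (1 + k) * (n.choose (1 + k) : ℝ)) := by
      rw [eq_div_iff hP.ne']; exact h1
    rw [hHval]; exact div_pos hR hP
  · have h1 := hHj (r - 1) (by omega)
    rw [show 1 + (r - 1) = r from by omega] at h1
    have hchoose : (0:ℝ) < (n.choose r : ℝ) := by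
      exact_mod_cast Nat.choose_pos hrn.le
    have hcast : (1:ℝ) + ((r - 1 : ℕ) : ℝ) = (r:ℝ) := by
      have h2 : ((1 + (r - 1) : ℕ) : ℝ) = (r:ℝ) := by
        congr 1; omega
      push_cast at h2; linarith
    rw [hcast] at h1
    have hP : (0:ℝ) < (r:ℝ) * r * (n.choose r : ℝ) := by positivity
    simp only [sub_self, mul_zero, zero_mul] at h1
    exact (mul_eq_zero.mp h1).resolve_right hP.ne'
  · intro j hjr hjn
    have hj1 : 1 ≤ j := by omega
    obtain ⟨k, rfl⟩ := Nat.exists_eq_add_of_le hj1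
    have h1 := hHj k (by omega)
    have hchoose : (0:ℝ) < (n.choose (1 + k) : ℝ) := by
      exact_mod_cast Nat.choose_pos (by omega : 1 + k ≤ n)
    have hP : (0:ℝ) < (r:ℝ) * (1 + k) * (n.choose (1 + k) : ℝ) := by positivity
    have hC1 : (0:ℝ) < ((n-1).choose k : ℝ) := by
      exact_mod_cast Nat.choose_pos (by omega : k ≤ n - 1)
    have hrk : (r:ℝ) - (1 + k) < 0 := by
      have : (r:ℝ) < ((1 + k : ℕ) : ℝ) := by exact_mod_cast hjr
      push_cast at this; linarith
    have hR : ((n-1).choose k : ℝ) * (n:ℝ) * ((r:ℝ) - (1 + k)) * κ₂ ^ (1 + k) < 0 := by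
      have hre : ((n-1).choose k : ℝ) * (n:ℝ) * ((r:ℝ) - (1 + k)) * κ₂ ^ (1 + k)
          = (((n-1).choose k : ℝ) * (n:ℝ) * κ₂ ^ (1 + k)) * ((r:ℝ) - (1 + k)) := by ring
      rw [hre]
      exact mul_neg_of_pos_of_neg (by positivity) hrk
    have hHval : H (1 + k) = ((n-1).choose k : ℝ) * (n:ℝ) * ((r:ℝ) - (1 + k)) * κ₂ ^ (1 + k)
        / ((r:ℝ) * (1 + k) * (n.choose (1 + k) : ℝ)) := by
      rw [eq_div_iff hP.ne']; exact h1
    rw [hHval]; exact div_neg_of_neg_of_pos hR hP
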